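/- For a unit vector ξ ∈ ℝ^{m+1} and x₀ on the unit sphere with ⟨ξ,x₀⟩ = tanh σ and x₀ ≠ ±ξ, the curve x(t) = tanh(σ+t)•ξ + sech(σ+t)•x̃₀, with x̃₀ = cosh(σ)•x₀ − sinh(σ)•ξ, satisfies the ODE x'(t) = ξ − ⟨ξ,x(t)⟩•x(t) with x(0) = x₀, and stays on the unit sphere: ‖x(t)‖ = 1 for all t. -/

import Mathlib

open RealInnerProductSpace

/-- The curve `x(t) = tanh(σ+t)•ξ + sech(σ+t)•x̃₀`, with
`x̃₀ = cosh(σ)•x₀ − sinh(σ)•ξ`, solves `x' = ξ − ⟨ξ,x⟩•x`, `x(0) = x₀`,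
and stays on the unit sphere. -/
theorem stmt_9 {V : Type*} [NormedAddCommGroup V] [InnerProductSpace ℝ V]
    (ξ x₀ : V) (hξ : ‖ξ‖ = 1) (hx₀ : ‖x₀‖ = 1)
    (σ : ℝ) (hσ : ⟪ξ, x₀⟫ = Real.tanh σ) (hne : x₀ ≠ ξ ∧ x₀ ≠ -ξ)
    (x : ℝ → V)
    (hxdef : ∀ t : ℝ, x t = Real.tanh (σ + t) • ξ +
      (Real.cosh (σ + t))⁻¹ • (Real.cosh σ • x₀ - Real.sinh σ • ξ)) :
    x 0 = x₀ ∧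
    (∀ t : ℝ, HasDerivAt x (ξ - ⟪ξ, x t⟫ • x t) t) ∧
    (∀ t : ℝ, ‖x t‖ = 1) := by
  set w : V := Real.cosh σ • x₀ - Real.sinh σ • ξ with hw
  have hc0 : Real.cosh σ ≠ 0 := (Real.cosh_pos σ).ne'
  have hξξ : ⟪ξ, ξ⟫ = 1 := by
    rw [real_inner_self_eq_norm_mul_norm, hξ]; ring
  have hxx : ⟪x₀, x₀⟫ = 1 := by
    rw [real_inner_self_eq_norm_mul_norm, hx₀]; ring
  have hσx : ⟪x₀, ξ⟫ = Real.tanh σ := by rw [real_inner_comm]; exact hσ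
  have hξw : ⟪ξ, w⟫ = 0 := by
    simp only [hw, inner_sub_right, real_inner_smul_right, hσ, hξξ,
      Real.tanh_eq_sinh_div_cosh]
    field_simp
    ring
  have hww : ⟪w, w⟫ = 1 := by
    have hcs := Real.cosh_sq_sub_sinh_sq σ
    simp only [hw, inner_sub_left, inner_sub_right, real_inner_smul_left,
      real_inner_smul_right, hσ, hσx, hξξ, hxx, Real.tanh_eq_sinh_div_cosh]
    field_simp
    nlinarith [hcs]
  have hxt : ∀ t, ⟪ξ, x t⟫ = Real.tanh (σ + t) := by
    intro t
    rw [hxdef t]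
    simp [inner_add_right, real_inner_smul_right, hξξ, hξw, hξ]
  refine ⟨?_, ?_, ?_⟩
  · rw [hxdef 0, add_zero]
    rw [hw, smul_sub, smul_smul, smul_smul, inv_mul_cancel₀ hc0, one_smul,
      Real.tanh_eq_sinh_div_cosh]
    field_simp
    abel
  · intro t
    set u := σ + t with hu
    have hcu : Real.cosh u ≠ 0 := (Real.cosh_pos u).ne'
    have hid : HasDerivAt (fun s : ℝ => σ + s) 1 t := by
      simpa using (hasDerivAt_id t).const_add σ
    have hsinh : HasDerivAt (fun s : ℝ => Real.sinh (σ + s)) (Real.cosh u) t := by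
      have h := (Real.hasDerivAt_sinh u).comp t hid; rw [mul_one] at h; exact h
    have hcosh : HasDerivAt (fun s : ℝ => Real.cosh (σ + s)) (Real.sinh u) t := by
      have h := (Real.hasDerivAt_cosh u).comp t hid; rw [mul_one] at h; exact h
    have htanh : HasDerivAt (fun s : ℝ => Real.tanh (σ + s))
        ((Real.cosh u ^ 2)⁻¹) t := by
      have h := hsinh.div hcosh hcu
      have heq : (fun s : ℝ => Real.sinh (σ + s) / Real.cosh (σ + s)) =
          fun s : ℝ => Real.tanh (σ + s) := by
        funext s; rw [Real.tanh_eq_sinh_div_cosh]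
      change HasDerivAt (fun s : ℝ => Real.sinh (σ + s) / Real.cosh (σ + s)) _ t at h
      rw [← hu] at h
      rw [heq] at h
      convert h using 1
      have := Real.cosh_sq_sub_sinh_sq u
      field_simp
      nlinarith [this]
    have hsech : HasDerivAt (fun s : ℝ => (Real.cosh (σ + s))⁻¹)
        (-(Real.sinh u / Real.cosh u ^ 2)) t := by
      have h := hcosh.inv hcu; rw [← hu, neg_div] at h; exact h
    have hx' : HasDerivAt x ((Real.cosh u ^ 2)⁻¹ • ξ +
        (-(Real.sinh u / Real.cosh u ^ 2)) • w) t := by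
      have := (htanh.smul_const ξ).add (hsech.smul_const w)
      refine HasDerivAt.congr_of_eventuallyEq this ?_
      filter_upwards with s
      rw [hxdef s]
      rfl
    convert hx' using 1
    rw [hxt t, hxdef t, ← hu]
    rw [smul_add, smul_smul, smul_smul, Real.tanh_eq_sinh_div_cosh]
    rw [sub_add_eq_sub_sub]
    match_scalars
    · field_simp
      nlinarith [Real.cosh_sq_sub_sinh_sq u]
    · field_simp
  · intro t
    have h1 : ⟪x t, x t⟫ = 1 := by
      rw [hxdef t]
      have hcu : Real.cosh (σ + t) ≠ 0 := (Real.cosh_pos (σ + t)).ne'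
      have hwξ : ⟪w, ξ⟫ = 0 := by rw [real_inner_comm]; exact hξw
      simp only [inner_add_left, inner_add_right, real_inner_smul_left,
        real_inner_smul_right, hξξ, hξw, hwξ, hww, Real.tanh_eq_sinh_div_cosh]
      field_simp
      nlinarith [Real.cosh_sq_sub_sinh_sq (σ + t)]
    have := real_inner_self_eq_norm_mul_norm (x t)
    nlinarith [norm_nonneg (x t)]
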